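/- Let F, S, H, K1, K̂, B, K be real n×n matrices with K̂ = K1 + F·H. Let T_a, T ∈ ℝ, let w : ℝ → ℝⁿ be continuous, ρ : ℝ → ℝⁿ be continuously differentiable, and let e : ℝ → ℝⁿ be differentiable and satisfy, for all t ≥ T_a, ė(t) = F·e(t) + S·(w(t−T) + B·K·ρ(t−T)) − K1·ρ(t−T) − H·ρ̇(t−T). Then for all t ≥ T_a: e(t) = exp((t−T_a)·F)·(e(T_a) + H·ρ(T_a−T)) − H·ρ(t−T) + ∫_{T_a}^{t} exp((t−τ)·F)·[S·w(τ−T) + (S·B·K − K̂)·ρ(τ−T)] dτ. -/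

import Mathlib

open NormedSpace intervalIntegral

set_option synthInstance.maxHeartbeats 1000000 in
/-- Auxiliary: the one-parameter group law for the matrix exponential. -/
lemma exp_smul_add_aux {n : ℕ}
    (F : EuclideanSpace ℝ (Fin n) →L[ℝ] EuclideanSpace ℝ (Fin n)) (a b : ℝ) :
    NormedSpace.exp (a • F) * NormedSpace.exp (b • F)
      = NormedSpace.exp ((a + b) • F) := by
  have hc : Commute (a • F) (b • F) := by
    show (a • F) * (b • F) = (b • F) * (a • F)
    ext v
    simp [ContinuousLinearMap.mul_apply, map_smul, smul_smul, mul_comm a b]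
  rw [show (a + b) • F = a • F + b • F from add_smul a b F,
    NormedSpace.exp_add_of_commute_of_mem_ball (𝕂 := ℝ) hc
      ((expSeries_radius_eq_top ℝ (EuclideanSpace ℝ (Fin n) →L[ℝ] EuclideanSpace ℝ (Fin n))).symm ▸
        edist_lt_top _ _)
      ((expSeries_radius_eq_top ℝ (EuclideanSpace ℝ (Fin n) →L[ℝ] EuclideanSpace ℝ (Fin n))).symm ▸
        edist_lt_top _ _)]

/-- **Explicit solution of the estimation-error dynamics under replay attack
(Statement 1).**
Matrices are continuous linear maps on Euclidean space, with matrix product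
given by `*` (composition). Given `Khat = K1 + F·H`, a continuous process
noise `w`, a continuously differentiable measurement noise `ρ` (with
derivative `ρ'`), and an error trajectory `e` satisfying, for all `t ≥ T_a`,
`ė(t) = F e(t) + S (w(t−T) + B K ρ(t−T)) − K1 ρ(t−T) − H ρ̇(t−T)`,
the variation-of-constants formula with integration by parts gives, for all
`t ≥ T_a`,
`e(t) = exp((t−T_a) F) (e(T_a) + H ρ(T_a−T)) − H ρ(t−T)
        + ∫_{T_a}^t exp((t−τ) F) (S w(τ−T) + (S B K − Khat) ρ(τ−T)) dτ`. -/
theorem replay_error_explicit_solution {n : ℕ}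
    (F S H K1 Khat B K : EuclideanSpace ℝ (Fin n) →L[ℝ] EuclideanSpace ℝ (Fin n))
    (hKhat : Khat = K1 + F * H)
    (T_a T : ℝ)
    (w ρ ρ' : ℝ → EuclideanSpace ℝ (Fin n))
    (hw : Continuous w)
    (hρ : ∀ t : ℝ, HasDerivAt ρ (ρ' t) t) (hρ' : Continuous ρ')
    (e : ℝ → EuclideanSpace ℝ (Fin n))
    (hode : ∀ t : ℝ, T_a ≤ t →
      HasDerivAt e
        (F (e t) + S (w (t - T) + (B * K) (ρ (t - T)))
          - K1 (ρ (t - T)) - H (ρ' (t - T))) t) :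
    ∀ t : ℝ, T_a ≤ t →
      e t = (NormedSpace.exp ((t - T_a) • F)) (e T_a + H (ρ (T_a - T)))
            - H (ρ (t - T))
            + ∫ τ in T_a..t,
                (NormedSpace.exp ((t - τ) • F))
                  (S (w (τ - T)) + (S * B * K - Khat) (ρ (τ - T))) := by
  intro t ht
  have hρc : Continuous ρ := by
    exact continuous_iff_continuousAt.mpr fun x => (hρ x).continuousAt
  set f : ℝ → EuclideanSpace ℝ (Fin n) :=
    fun τ => S (w (τ - T)) + (S * B * K - Khat) (ρ (τ - T)) with hfdef
  set g : ℝ → EuclideanSpace ℝ (Fin n) := fun τ => e τ + H (ρ (τ - T)) with hgdef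
  have hfc : Continuous f := by
    apply Continuous.add
    · exact S.continuous.comp (hw.comp (continuous_id.sub continuous_const))
    · exact (S * B * K - Khat).continuous.comp (hρc.comp (continuous_id.sub continuous_const))
  -- derivative of shifted ρ
  have hρT : ∀ τ : ℝ, HasDerivAt (fun s => ρ (s - T)) (ρ' (τ - T)) τ := by
    intro τ
    simpa [Function.comp_def] using (hρ (τ - T)).scomp τ ((hasDerivAt_id τ).sub_const T)
  have hHρ : ∀ τ : ℝ, HasDerivAt (fun s => H (ρ (s - T))) (H (ρ' (τ - T))) τ := by
    intro τ
    exact H.hasFDerivAt.comp_hasDerivAt τ (hρT τ)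
  -- g satisfies g' = F g + f
  have hg' : ∀ τ : ℝ, T_a ≤ τ → HasDerivAt g (F (g τ) + f τ) τ := by
    intro τ hτ
    have h := (hode τ hτ).add (hHρ τ)
    refine h.congr_deriv ?_
    simp only [hgdef, hfdef, hKhat, ContinuousLinearMap.mul_apply,
      ContinuousLinearMap.add_apply, ContinuousLinearMap.sub_apply, map_add]
    abel
  -- the auxiliary function u
  set u : ℝ → EuclideanSpace ℝ (Fin n) :=
    fun τ => (NormedSpace.exp ((T_a - τ) • F)) (g τ) with hudef
  have hC : ∀ τ : ℝ, HasDerivAt (fun s : ℝ => NormedSpace.exp ((T_a - s) • F))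
      (-(NormedSpace.exp ((T_a - τ) • F) * F)) τ := by
    intro τ
    have h1 := hasDerivAt_exp_smul_const (𝕂 := ℝ) F (T_a - τ)
    have h2 : HasDerivAt (fun s : ℝ => T_a - s) (-1 : ℝ) τ := by
      simpa using (hasDerivAt_id' τ).const_sub T_a
    have := h1.scomp τ h2
    simpa [neg_smul, Function.comp_def] using this
  have hu : ∀ τ : ℝ, T_a ≤ τ →
      HasDerivAt u ((NormedSpace.exp ((T_a - τ) • F)) (f τ)) τ := by
    intro τ hτ
    have h := (hC τ).clm_apply (hg' τ hτ)
    refine h.congr_deriv ?_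
    simp only [ContinuousLinearMap.neg_apply, ContinuousLinearMap.mul_apply, map_add]
    abel
  -- continuity / integrability of the forcing in u'
  have hCcont : Continuous fun τ : ℝ => NormedSpace.exp ((T_a - τ) • F) := by
    exact (continuous_iff_continuousAt.2 fun x => (NormedSpace.exp_analytic (𝕂 := ℝ) x).continuousAt).comp ((continuous_const.sub continuous_id).smul continuous_const)
  have hint : IntervalIntegrable (fun τ => (NormedSpace.exp ((T_a - τ) • F)) (f τ))
      MeasureTheory.volume T_a t := (hCcont.clm_apply hfc).intervalIntegrable _ _
  -- FTC
  have key : (∫ τ in T_a..t, (NormedSpace.exp ((T_a - τ) • F)) (f τ)) = u t - u T_a := by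
    refine integral_eq_sub_of_hasDerivAt (fun τ hτ => hu τ ?_) hint
    rw [Set.uIcc_of_le ht] at hτ
    exact hτ.1
  have hexp : ∀ a b : ℝ, NormedSpace.exp (a • F) * NormedSpace.exp (b • F)
      = NormedSpace.exp ((a + b) • F) := exp_smul_add_aux F
  have huTa : u T_a = g T_a := by
    show (NormedSpace.exp ((T_a - T_a) • F)) (g T_a) = g T_a
    rw [sub_self, zero_smul ℝ F, NormedSpace.exp_zero]
    simp
  have hgt : g t = (NormedSpace.exp ((t - T_a) • F)) (u t) := by
    have h1 : NormedSpace.exp ((t - T_a) • F) * NormedSpace.exp ((T_a - t) • F) = 1 := by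
      rw [hexp]
      rw [show t - T_a + (T_a - t) = 0 from by ring, zero_smul ℝ F, NormedSpace.exp_zero]
    calc g t = (NormedSpace.exp ((t - T_a) • F) * NormedSpace.exp ((T_a - t) • F)) (g t) := by
          rw [h1]; simp
      _ = (NormedSpace.exp ((t - T_a) • F)) (u t) := by
          rw [ContinuousLinearMap.mul_apply]
  have hmain : g t = (NormedSpace.exp ((t - T_a) • F)) (g T_a)
      + (NormedSpace.exp ((t - T_a) • F))
          (∫ τ in T_a..t, (NormedSpace.exp ((T_a - τ) • F)) (f τ)) := by
    have hut : u t = g T_a + ∫ τ in T_a..t, (NormedSpace.exp ((T_a - τ) • F)) (f τ) := by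
      rw [key, huTa]; abel
    rw [hgt, hut, map_add]
  have hpull : (NormedSpace.exp ((t - T_a) • F))
        (∫ τ in T_a..t, (NormedSpace.exp ((T_a - τ) • F)) (f τ))
      = ∫ τ in T_a..t, (NormedSpace.exp ((t - τ) • F)) (f τ) := by
    rw [← ContinuousLinearMap.intervalIntegral_comp_comm _ hint]
    apply intervalIntegral.integral_congr
    intro τ _
    show (NormedSpace.exp ((t - T_a) • F)) ((NormedSpace.exp ((T_a - τ) • F)) (f τ)) = _
    rw [← ContinuousLinearMap.mul_apply, hexp]
    congr 2
    ring
  have het : e t = g t - H (ρ (t - T)) := by simp [hgdef]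
  rw [het, hmain, hpull]
  have hgTa : g T_a = e T_a + H (ρ (T_a - T)) := rfl
  rw [hgTa]
  abel
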